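/- Let H be a complex inner product space, let f₀, f₁ ∈ H be orthonormal, and let (v₀, v₁) and (w₀, w₁) each be orthonormal pairs in H. For a pair (x₀,x₁) define g¹(x) = (f₀⊗x₀ + f₁⊗x₁)/√2, g²(x) = (f₀⊗x₀ − f₁⊗x₁)/√2, g³(x) = (f₀⊗x₁ + f₁⊗x₀)/√2, g⁴(x) = (f₀⊗x₁ − f₁⊗x₀)/√2. If ⟨g¹(w), gᵏ(v)⟩ = 0 for k = 2, 3, 4 and ⟨w₀, v₀⟩ + ⟨w₁, v₁⟩ = 0, then ⟨w_j, v_k⟩ = 0 for all j, k ∈ {0,1}. -/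

import Mathlib

open scoped InnerProductSpace

lemma inner_expand' {n : ℕ} (f₀ f₁ a₀ a₁ b₀ b₁ : EuclideanSpace ℂ (Fin n)) (ε : ℂ) :
    (∑ p : Fin n × Fin n,
      (starRingEnd ℂ) ((f₀ p.1 * a₀ p.2 + f₁ p.1 * a₁ p.2) / (Real.sqrt 2 : ℂ)) *
        ((f₀ p.1 * b₀ p.2 + ε * (f₁ p.1 * b₁ p.2)) / (Real.sqrt 2 : ℂ)))
    = (⟪f₀, f₀⟫_ℂ * ⟪a₀, b₀⟫_ℂ + ε * (⟪f₀, f₁⟫_ℂ * ⟪a₀, b₁⟫_ℂ)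
        + ⟪f₁, f₀⟫_ℂ * ⟪a₁, b₀⟫_ℂ + ε * (⟪f₁, f₁⟫_ℂ * ⟪a₁, b₁⟫_ℂ)) / 2 := by
  have hs : ((Real.sqrt 2 : ℝ) : ℂ) * ((Real.sqrt 2 : ℝ) : ℂ) = 2 := by
    norm_cast
    exact Real.mul_self_sqrt (by norm_num)
  simp only [PiLp.inner_apply, RCLike.inner_apply]
  rw [Fintype.sum_prod_type]
  rw [Finset.sum_mul_sum, Finset.sum_mul_sum, Finset.sum_mul_sum, Finset.sum_mul_sum]
  simp only [Finset.mul_sum, ← Finset.sum_add_distrib, Finset.sum_div]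
  refine Finset.sum_congr rfl fun a _ => Finset.sum_congr rfl fun b _ => ?_
  simp only [map_div₀, map_add, map_mul, Complex.conj_ofReal]
  rw [div_mul_div_comm, hs]
  ring

/-- The vectors `g¹(x), g²(x), g³(x), g⁴(x) ∈ H ⊗ H` (with `H = ℂⁿ`, so `H ⊗ H` is
identified with vectors indexed by pairs) built from the orthonormal pair `f₀, f₁` and a
pair `x = (x₀, x₁)`. -/
noncomputable def gVec {n : ℕ} (k : Fin 4) (f₀ f₁ x₀ x₁ : EuclideanSpace ℂ (Fin n)) :
    EuclideanSpace ℂ (Fin n × Fin n) :=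
  (WithLp.equiv 2 (Fin n × Fin n → ℂ)).symm fun p =>
    (if k = 0 then f₀ p.1 * x₀ p.2 + f₁ p.1 * x₁ p.2
     else if k = 1 then f₀ p.1 * x₀ p.2 - f₁ p.1 * x₁ p.2
     else if k = 2 then f₀ p.1 * x₁ p.2 + f₁ p.1 * x₀ p.2
     else f₀ p.1 * x₁ p.2 - f₁ p.1 * x₀ p.2) / (Real.sqrt 2 : ℂ)

/-- the support-orthogonality step: if `⟨g¹(w), gᵏ(v)⟩ = 0` for
`k = 2, 3, 4` and `⟨w₀, v₀⟩ + ⟨w₁, v₁⟩ = 0`, then `⟨w_j, v_k⟩ = 0` for all `j, k`. -/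
theorem stmt15 {n : ℕ} (f₀ f₁ v₀ v₁ w₀ w₁ : EuclideanSpace ℂ (Fin n))
    (hf : Orthonormal ℂ ![f₀, f₁])
    (hv : Orthonormal ℂ ![v₀, v₁]) (hw : Orthonormal ℂ ![w₀, w₁])
    (h2 : ⟪gVec 0 f₀ f₁ w₀ w₁, gVec 1 f₀ f₁ v₀ v₁⟫_ℂ = 0)
    (h3 : ⟪gVec 0 f₀ f₁ w₀ w₁, gVec 2 f₀ f₁ v₀ v₁⟫_ℂ = 0)
    (h4 : ⟪gVec 0 f₀ f₁ w₀ w₁, gVec 3 f₀ f₁ v₀ v₁⟫_ℂ = 0)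
    (h5 : ⟪w₀, v₀⟫_ℂ + ⟪w₁, v₁⟫_ℂ = 0) :
    ⟪w₀, v₀⟫_ℂ = 0 ∧ ⟪w₀, v₁⟫_ℂ = 0 ∧ ⟪w₁, v₀⟫_ℂ = 0 ∧ ⟪w₁, v₁⟫_ℂ = 0 := by

  rw [orthonormal_iff_ite] at hf
  have h00 : ⟪f₀, f₀⟫_ℂ = 1 := by simpa using hf 0 0
  have h01 : ⟪f₀, f₁⟫_ℂ = 0 := by simpa using hf 0 1
  have h10 : ⟪f₁, f₀⟫_ℂ = 0 := by simpa using hf 1 0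
  have h11 : ⟪f₁, f₁⟫_ℂ = 1 := by simpa using hf 1 1
  have red : ∀ (b₀ b₁ : EuclideanSpace ℂ (Fin n)) (ε : ℂ),
      (∑ p : Fin n × Fin n,
        (starRingEnd ℂ) ((f₀ p.1 * w₀ p.2 + f₁ p.1 * w₁ p.2) / (Real.sqrt 2 : ℂ)) *
          ((f₀ p.1 * b₀ p.2 + ε * (f₁ p.1 * b₁ p.2)) / (Real.sqrt 2 : ℂ)))
      = (⟪w₀, b₀⟫_ℂ + ε * ⟪w₁, b₁⟫_ℂ) / 2 := by
    intro b₀ b₁ ε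
    rw [inner_expand', h00, h01, h10, h11]; ring
  have h2' : (⟪w₀, v₀⟫_ℂ + (-1) * ⟪w₁, v₁⟫_ℂ) / 2 = 0 := by
    rw [← red v₀ v₁ (-1), ← h2]
    simp only [gVec, PiLp.inner_apply, RCLike.inner_apply, WithLp.equiv_symm_apply, WithLp.ofLp_toLp,
      Fin.reduceEq, reduceIte, if_true, if_false]
    refine Finset.sum_congr rfl fun p _ => ?_
    ring
  have h3' : (⟪w₀, v₁⟫_ℂ + 1 * ⟪w₁, v₀⟫_ℂ) / 2 = 0 := by
    rw [← red v₁ v₀ 1, ← h3]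
    simp only [gVec, PiLp.inner_apply, RCLike.inner_apply, WithLp.equiv_symm_apply, WithLp.ofLp_toLp,
      Fin.reduceEq, reduceIte, if_true, if_false]
    refine Finset.sum_congr rfl fun p _ => ?_
    ring
  have h4' : (⟪w₀, v₁⟫_ℂ + (-1) * ⟪w₁, v₀⟫_ℂ) / 2 = 0 := by
    rw [← red v₁ v₀ (-1), ← h4]
    simp only [gVec, PiLp.inner_apply, RCLike.inner_apply, WithLp.equiv_symm_apply, WithLp.ofLp_toLp,
      Fin.reduceEq, reduceIte, if_true, if_false]
    refine Finset.sum_congr rfl fun p _ => ?_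
    ring
  refine ⟨by linear_combination h5 / 2 + h2', by linear_combination h3' + h4',
    by linear_combination h3' - h4', by linear_combination h5 / 2 - h2'⟩
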